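/- Fix t > 0 and r ∈ (0,1), and let B_n(r) := E[Σ_{u,w ∈ T'_n} r^{d(u,w)}] for the weighted random recursive tree with root weight t. Then there exists a constant C > 0 (depending on r and t) such that for all n ≥ 0, B_n(r) ≤ C Σ_{k=0}^n (n+1)^{2r}/(k+1)^{2r}. -/

import Mathlib

open MeasureTheory ProbabilityTheory Filter Topology

instance : MeasurableSpace (Option ℕ) := ⊤

/-- Depth (graph distance to the root `o`) of the vertex `w n` in the recursive tree
whose parent map is `P` : `P n = none` means the parent of `w n` is the root `o`, and
`P n = some j` (with `j < n`) means the parent of `w n` is `w j`. -/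
def wrrtDepth (P : ℕ → Option ℕ) : ℕ → ℕ
  | n =>
    match P n with
    | none => 1
    | some j => if h : j < n then wrrtDepth P j + 1 else 1
termination_by n => n

/-- The parent of a vertex (`none` is the root `o`, `some n` is the vertex `w n`). -/
def wrrtParent (P : ℕ → Option ℕ) : Option ℕ → Option ℕ
  | none => none
  | some n =>
    match P n with
    | none => none
    | some j => if j < n then some j else none

/-- Depth of a vertex of the recursive tree (`none` is the root `o`). -/
def wrrtDepthV (P : ℕ → Option ℕ) : Option ℕ → ℕ
  | none => 0
  | some n => wrrtDepth P n

def wrrtDistAux (P : ℕ → Option ℕ) : ℕ → Option ℕ → Option ℕ → ℕ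
  | 0, _, _ => 0
  | fuel + 1, u, w =>
    if u = w then 0
    else if wrrtDepthV P u < wrrtDepthV P w then wrrtDistAux P fuel u (wrrtParent P w) + 1
    else wrrtDistAux P fuel (wrrtParent P u) w + 1

/-- Graph distance `d(u,w)` between two vertices of the recursive tree with parent
map `P`: repeatedly move the deeper vertex to its parent until the two meet. -/
def wrrtDist (P : ℕ → Option ℕ) (u w : Option ℕ) : ℕ :=
  wrrtDistAux P (wrrtDepthV P u + wrrtDepthV P w) u w

/-- `A_n(r) = E [ ∑_{u ∈ T'_n} r^{d(u)} ]`, the sum over the non-root vertices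
`w_0, …, w_n` of the random recursive tree with (random) parent maps `p · ω`. -/
noncomputable def wrrtA {Ω : Type*} [MeasurableSpace Ω] (μ : Measure Ω) (r : ℝ)
    (p : ℕ → Ω → Option ℕ) (n : ℕ) : ℝ :=
  ∫ ω, (∑ u ∈ Finset.range (n + 1), r ^ wrrtDepth (fun k => p k ω) u) ∂μ

/-- `B_n(r) = E [ ∑_{u,w ∈ T'_n} r^{d(u,w)} ]`, the sum over all ordered pairs of
non-root vertices of the random recursive tree with (random) parent maps `p · ω`. -/
noncomputable def wrrtB {Ω : Type*} [MeasurableSpace Ω] (μ : Measure Ω) (r : ℝ)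
    (p : ℕ → Ω → Option ℕ) (n : ℕ) : ℝ :=
  ∫ ω, (∑ u ∈ Finset.range (n + 1), ∑ w ∈ Finset.range (n + 1),
      r ^ wrrtDist (fun k => p k ω) (some u) (some w)) ∂μ

section Comb
variable (P Q : ℕ → Option ℕ)

lemma wrrtDepth_eq (n : ℕ) : wrrtDepth P n =
    match P n with
    | none => 1
    | some j => if j < n then wrrtDepth P j + 1 else 1 := by
  rw [wrrtDepth]
  rcases P n with _ | j
  · rfl
  · by_cases h : j < n <;> simp [h]

lemma one_le_wrrtDepth (n : ℕ) : 1 ≤ wrrtDepth P n := by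
  rw [wrrtDepth_eq]
  rcases P n with _ | j
  · exact le_refl _
  · by_cases h : j < n <;> simp [h]

lemma wrrtDepthV_eq_zero {v : Option ℕ} : wrrtDepthV P v = 0 ↔ v = none := by
  rcases v with _ | m
  · simp [wrrtDepthV]
  · simpa [wrrtDepthV] using (Nat.lt_of_lt_of_le Nat.zero_lt_one (one_le_wrrtDepth P m)).ne'

lemma wrrtDepthV_parent (n : ℕ) :
    wrrtDepthV P (wrrtParent P (some n)) + 1 = wrrtDepth P n := by
  rcases h : P n with _ | j
  · simp [wrrtParent, h, wrrtDepthV, wrrtDepth_eq P n]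
  · by_cases hj : j < n <;> simp [wrrtParent, h, hj, wrrtDepthV, wrrtDepth_eq P n]

lemma wrrtDistAux_zero (a b : Option ℕ) : wrrtDistAux P 0 a b = 0 := rfl

lemma wrrtDistAux_succ (f : ℕ) (a b : Option ℕ) : wrrtDistAux P (f + 1) a b =
    if a = b then 0
    else if wrrtDepthV P a < wrrtDepthV P b then wrrtDistAux P f a (wrrtParent P b) + 1
    else wrrtDistAux P f (wrrtParent P a) b + 1 := rfl

lemma wrrtDist_def (a b : Option ℕ) :
    wrrtDist P a b = wrrtDistAux P (wrrtDepthV P a + wrrtDepthV P b) a b := rfl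

lemma wrrtDepthV_some_pos (m : ℕ) : 0 < wrrtDepthV P (some m) :=
  Nat.lt_of_lt_of_le Nat.zero_lt_one (one_le_wrrtDepth P m)

lemma wrrtDistAux_self (f : ℕ) (a : Option ℕ) : wrrtDistAux P f a a = 0 := by
  cases f
  · rfl
  · simp [wrrtDistAux_succ]

/-- Fuel monotonicity. -/
lemma wrrtDistAux_succ_of_le :
    ∀ f (a b : Option ℕ), wrrtDepthV P a + wrrtDepthV P b ≤ f →
      wrrtDistAux P (f + 1) a b = wrrtDistAux P f a b := by
  intro f
  induction f with
  | zero =>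
    intro a b h
    have ha : wrrtDepthV P a = 0 := by omega
    have hb : wrrtDepthV P b = 0 := by omega
    rw [(wrrtDepthV_eq_zero P).mp ha, (wrrtDepthV_eq_zero P).mp hb]
    simp [wrrtDistAux_succ, wrrtDistAux_zero]
  | succ g IH =>
    intro a b h
    by_cases hab : a = b
    · subst hab; rw [wrrtDistAux_self, wrrtDistAux_self]
    · rw [wrrtDistAux_succ P (g + 1) a b, wrrtDistAux_succ P g a b]
      simp only [hab, if_false]
      by_cases hlt : wrrtDepthV P a < wrrtDepthV P b
      · simp only [hlt, if_true]
        rcases b with _ | m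
        · simp [wrrtDepthV] at hlt
        · have hpb := wrrtDepthV_parent P m
          have hdb : wrrtDepthV P (some m) = wrrtDepth P m := rfl
          rw [IH a (wrrtParent P (some m)) (by omega)]
      · simp only [hlt, if_false]
        rcases a with _ | m
        · exfalso
          have h0 : wrrtDepthV P (none : Option ℕ) = 0 := rfl
          rcases b with _ | m
          · exact hab rfl
          · have := wrrtDepthV_some_pos P m
            omega
        · have hpa := wrrtDepthV_parent P m
          have hda : wrrtDepthV P (some m) = wrrtDepth P m := rfl
          rcases b with _ | m'
          · have h0 : wrrtDepthV P (none : Option ℕ) = 0 := rfl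
            rw [IH (wrrtParent P (some m)) none (by omega)]
          · have hdb : wrrtDepthV P (some m') = wrrtDepth P m' := rfl
            rw [IH (wrrtParent P (some m)) (some m') (by omega)]

lemma wrrtDistAux_eq_dist :
    ∀ f (a b : Option ℕ), wrrtDepthV P a + wrrtDepthV P b ≤ f →
      wrrtDistAux P f a b = wrrtDist P a b := by
  intro f
  induction f with
  | zero =>
    intro a b h
    have : wrrtDepthV P a + wrrtDepthV P b = 0 := by omega
    rw [wrrtDist, this]
  | succ g IH =>
    intro a b h
    rcases Nat.lt_or_ge (wrrtDepthV P a + wrrtDepthV P b) (g + 1) with h' | h'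
    · rw [wrrtDistAux_succ_of_le P g a b (by omega), IH a b (by omega)]
    · have : wrrtDepthV P a + wrrtDepthV P b = g + 1 := by omega
      rw [wrrtDist, this]

lemma wrrtDist_self (a : Option ℕ) : wrrtDist P a a = 0 := wrrtDistAux_self P _ a

/-- helper for the equal-depth case of symmetry -/
lemma wrrtDistAux_shift (f : ℕ) (a b : Option ℕ) (hab : a ≠ b)
    (hd : wrrtDepthV P a = wrrtDepthV P b) :
    wrrtDistAux P f (wrrtParent P a) b = wrrtDistAux P f a (wrrtParent P b) := by
  have h0 : wrrtDepthV P (none : Option ℕ) = 0 := rfl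
  rcases a with _ | m
  · rcases b with _ | m'
    · exact absurd rfl hab
    · exfalso
      have := wrrtDepthV_some_pos P m'
      omega
  rcases b with _ | m'
  · exfalso
    have := wrrtDepthV_some_pos P m
    omega
  · -- both some
    have hpa := wrrtDepthV_parent P m
    have hpb := wrrtDepthV_parent P m'
    have hda : wrrtDepthV P (some m) = wrrtDepth P m := rfl
    have hdb : wrrtDepthV P (some m') = wrrtDepth P m' := rfl
    cases f with
    | zero => rfl
    | succ g =>
      rw [wrrtDistAux_succ, wrrtDistAux_succ]
      have h1 : wrrtParent P (some m) ≠ some m' := by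
        intro hc
        have : wrrtDepthV P (wrrtParent P (some m)) = wrrtDepth P m' := by rw [hc]; exact hdb
        omega
      have h2 : (some m : Option ℕ) ≠ wrrtParent P (some m') := by
        intro hc
        have : wrrtDepthV P (wrrtParent P (some m')) = wrrtDepth P m := by rw [← hc]; exact hda
        omega
      have h3 : wrrtDepthV P (wrrtParent P (some m)) < wrrtDepthV P (some m') := by omega
      have h4 : ¬ wrrtDepthV P (some m) < wrrtDepthV P (wrrtParent P (some m')) := by omega
      simp only [h1, h2, h3, h4, if_true, if_false]

lemma wrrtDistAux_symm : ∀ f (a b : Option ℕ), wrrtDistAux P f a b = wrrtDistAux P f b a := by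
  intro f
  induction f with
  | zero => intro a b; rfl
  | succ g IH =>
    intro a b
    rw [wrrtDistAux_succ, wrrtDistAux_succ]
    by_cases hab : a = b
    · simp [hab]
    · have hba : b ≠ a := fun h => hab h.symm
      simp only [hab, hba, if_false]
      rcases Nat.lt_trichotomy (wrrtDepthV P a) (wrrtDepthV P b) with h | h | h
      · simp only [h, Nat.lt_asymm h, if_true, if_false, IH]
      · simp only [h, lt_irrefl, if_false]
        rw [wrrtDistAux_shift P g a b hab h, IH]
      · simp only [Nat.lt_asymm h, h, if_true, if_false, IH]

lemma wrrtDist_symm (a b : Option ℕ) : wrrtDist P a b = wrrtDist P b a := by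
  rw [wrrtDist, wrrtDist, Nat.add_comm]
  exact wrrtDistAux_symm P _ a b

/-- `v` is a vertex with index `< n` (the root counts). -/
def wrrtBelow (n : ℕ) : Option ℕ → Prop
  | none => True
  | some j => j < n

lemma wrrtBelow_mono {n n' : ℕ} (h : n ≤ n') {v : Option ℕ} (hv : wrrtBelow n v) :
    wrrtBelow n' v := by
  rcases v with _ | j
  · trivial
  · exact Nat.lt_of_lt_of_le hv h

lemma wrrtBelow_parent (m : ℕ) : wrrtBelow (m + 1) (wrrtParent P (some m)) := by
  rcases h : P m with _ | j
  · simp [wrrtParent, h, wrrtBelow]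
  · by_cases hj : j < m <;> simp [wrrtParent, h, hj, wrrtBelow] <;> omega

/-- Key recursion: for a vertex `a` of index `< n`,
`d(a, w_n) = d(a, parent(w_n)) + 1`. -/
lemma wrrtDist_step (n : ℕ) : ∀ a : Option ℕ, wrrtBelow n a →
    wrrtDist P a (some n) = wrrtDist P a (wrrtParent P (some n)) + 1 := by
  have hpb := wrrtDepthV_parent P n
  have hdb : wrrtDepthV P (some n) = wrrtDepth P n := rfl
  -- strong induction on depth of a
  suffices H : ∀ D, ∀ a : Option ℕ, wrrtDepthV P a ≤ D → wrrtBelow n a →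
      wrrtDist P a (some n) = wrrtDist P a (wrrtParent P (some n)) + 1 by
    intro a ha; exact H (wrrtDepthV P a) a le_rfl ha
  intro D
  induction D with
  | zero =>
    intro a hD ha
    have : a = none := (wrrtDepthV_eq_zero P).mp (by omega)
    subst this
    -- depth a = 0 < depth (some n), first branch
    rw [wrrtDist_def, wrrtDist_def]
    have h0 : wrrtDepthV P (none : Option ℕ) = 0 := rfl
    have hfuel : wrrtDepthV P (none : Option ℕ) + wrrtDepthV P (some n)
        = (0 + wrrtDepthV P (wrrtParent P (some n))) + 1 := by omega
    rw [hfuel, wrrtDistAux_succ]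
    have hne : (none : Option ℕ) ≠ some n := by simp
    have hlt : wrrtDepthV P (none : Option ℕ) < wrrtDepthV P (some n) := by omega
    simp only [hne, hlt, if_true, if_false]
    rfl
  | succ D IH =>
    intro a hD ha
    have hne : a ≠ some n := by
      rcases a with _ | j
      · simp
      · have hj : j < n := ha
        simp only [ne_eq, Option.some.injEq]; omega
    rw [wrrtDist_def P a (some n)]
    by_cases hlt : wrrtDepthV P a < wrrtDepthV P (some n)
    · have hfuel : wrrtDepthV P a + wrrtDepthV P (some n)
          = (wrrtDepthV P a + wrrtDepthV P (wrrtParent P (some n))) + 1 := by omega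
      rw [hfuel, wrrtDistAux_succ]
      simp only [hne, hlt, if_true, if_false]
      rfl
    · -- a deeper or equal; a = some m
      rcases a with _ | m
      · exfalso
        have : wrrtDepthV P (none : Option ℕ) = 0 := rfl
        omega
      have hpa := wrrtDepthV_parent P m
      have hda : wrrtDepthV P (some m) = wrrtDepth P m := rfl
      have hm : m < n := ha
      have hbpa : wrrtBelow n (wrrtParent P (some m)) :=
        wrrtBelow_mono (by omega) (wrrtBelow_parent P m)
      have hfuel : wrrtDepthV P (some m) + wrrtDepthV P (some n)
          = (wrrtDepthV P (some m) + wrrtDepthV P (some n) - 1) + 1 := by omega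
      rw [hfuel, wrrtDistAux_succ]
      simp only [hne, hlt, if_false]
      have e1 : wrrtDistAux P (wrrtDepthV P (some m) + wrrtDepthV P (some n) - 1)
          (wrrtParent P (some m)) (some n) = wrrtDist P (wrrtParent P (some m)) (some n) :=
        wrrtDistAux_eq_dist P _ _ _ (by omega)
      rw [e1, IH (wrrtParent P (some m)) (by omega) hbpa]
      -- now RHS: compute wrrtDist a pb
      have hanepb : (some m : Option ℕ) ≠ wrrtParent P (some n) := by
        intro hc
        have : wrrtDepthV P (wrrtParent P (some n)) = wrrtDepth P m := by rw [← hc]; exact hda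
        omega
      have hfuel2 : wrrtDepthV P (some m) + wrrtDepthV P (wrrtParent P (some n))
          = (wrrtDepthV P (some m) + wrrtDepthV P (wrrtParent P (some n)) - 1) + 1 := by omega
      rw [wrrtDist_def P (some m) (wrrtParent P (some n)), hfuel2, wrrtDistAux_succ]
      have hnlt : ¬ wrrtDepthV P (some m) < wrrtDepthV P (wrrtParent P (some n)) := by omega
      simp only [hanepb, hnlt, if_false]
      have e2 : wrrtDistAux P (wrrtDepthV P (some m) + wrrtDepthV P (wrrtParent P (some n)) - 1)
          (wrrtParent P (some m)) (wrrtParent P (some n))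
          = wrrtDist P (wrrtParent P (some m)) (wrrtParent P (some n)) :=
        wrrtDistAux_eq_dist P _ _ _ (by omega)
      rw [e2]

lemma wrrtDepth_agree (n : ℕ) (h : ∀ k < n, P k = Q k) :
    ∀ j, j < n → wrrtDepth P j = wrrtDepth Q j := by
  intro j
  induction j using Nat.strong_induction_on with
  | _ j IH =>
    intro hj
    rw [wrrtDepth_eq P j, wrrtDepth_eq Q j, h j hj]
    rcases Q j with _ | i
    · rfl
    · by_cases hi : i < j
      · simp only [hi, if_true, IH i hi (by omega)]
      · simp [hi]

lemma wrrtParent_agree (n : ℕ) (h : ∀ k < n, P k = Q k) (v : Option ℕ)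
    (hv : wrrtBelow n v) : wrrtParent P v = wrrtParent Q v := by
  rcases v with _ | j
  · rfl
  · have hj : j < n := hv
    show wrrtParent P (some j) = wrrtParent Q (some j)
    have hPQ : P j = Q j := h j hj
    rcases hq : Q j with _ | i <;> simp [wrrtParent, hPQ, hq]

lemma wrrtDepthV_agree (n : ℕ) (h : ∀ k < n, P k = Q k) (v : Option ℕ)
    (hv : wrrtBelow n v) : wrrtDepthV P v = wrrtDepthV Q v := by
  rcases v with _ | j
  · rfl
  · exact wrrtDepth_agree P Q n h j hv

lemma wrrtBelow_parent' {n : ℕ} (v : Option ℕ) (hv : wrrtBelow n v) :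
    wrrtBelow n (wrrtParent P v) := by
  rcases v with _ | j
  · exact trivial
  · exact wrrtBelow_mono (Nat.succ_le_of_lt hv) (wrrtBelow_parent P j)

lemma wrrtDistAux_agree (n : ℕ) (h : ∀ k < n, P k = Q k) :
    ∀ f (a b : Option ℕ), wrrtBelow n a → wrrtBelow n b →
      wrrtDistAux P f a b = wrrtDistAux Q f a b := by
  intro f
  induction f with
  | zero => intro a b _ _; rfl
  | succ g IH =>
    intro a b ha hb
    rw [wrrtDistAux_succ P g a b, wrrtDistAux_succ Q g a b]
    by_cases hab : a = b
    · simp [hab]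
    · simp only [hab, if_false]
      rw [wrrtDepthV_agree P Q n h a ha, wrrtDepthV_agree P Q n h b hb,
        wrrtParent_agree P Q n h a ha, wrrtParent_agree P Q n h b hb]
      by_cases hlt : wrrtDepthV Q a < wrrtDepthV Q b
      · simp only [hlt, if_true]
        rw [IH a (wrrtParent Q b) ha (wrrtParent_agree P Q n h b hb ▸
          wrrtBelow_parent' P b hb)]
      · simp only [hlt, if_false]
        rw [IH (wrrtParent Q a) b (wrrtParent_agree P Q n h a ha ▸
          wrrtBelow_parent' P a ha) hb]

lemma wrrtDist_agree (n : ℕ) (h : ∀ k < n, P k = Q k) (a b : Option ℕ)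
    (ha : wrrtBelow n a) (hb : wrrtBelow n b) :
    wrrtDist P a b = wrrtDist Q a b := by
  rw [wrrtDist_def, wrrtDist_def, wrrtDepthV_agree P Q n h a ha,
    wrrtDepthV_agree P Q n h b hb]
  exact wrrtDistAux_agree P Q n h _ a b ha hb

end Comb

section Meas
open MeasureTheory

instance : MeasurableSingletonClass (Option ℕ) :=
  ⟨fun _ => MeasurableSpace.measurableSet_top⟩

variable {Ω : Type*} [MeasurableSpace Ω]

lemma measurable_bind' {α β : Type*} [MeasurableSpace α] [MeasurableSpace β]
    [Countable α] [MeasurableSingletonClass α]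
    {g : Ω → α} (hg : Measurable g) {h : α → Ω → β} (hh : ∀ a, Measurable (h a)) :
    Measurable fun ω => h (g ω) ω := by
  intro s hs
  have : (fun ω => h (g ω) ω) ⁻¹' s = ⋃ a : α, (g ⁻¹' {a}) ∩ ((h a) ⁻¹' s) := by
    ext ω; simp
  rw [this]
  exact MeasurableSet.iUnion fun a => (hg (measurableSet_singleton a)).inter (hh a hs)

variable {p : ℕ → Ω → Option ℕ}

lemma measurable_wrrtDepth (hp : ∀ n, Measurable (p n)) (u : ℕ) :
    Measurable fun ω => wrrtDepth (fun k => p k ω) u := by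
  induction u using Nat.strong_induction_on with
  | _ u IH =>
    have he : (fun ω => wrrtDepth (fun k => p k ω) u)
        = fun ω => (fun (x : Option ℕ) (ω : Ω) =>
            match x with
            | none => 1
            | some j => if j < u then wrrtDepth (fun k => p k ω) j + 1 else 1) (p u ω) ω := by
      funext ω
      rw [wrrtDepth_eq]
    rw [he]
    refine measurable_bind' (h := fun (x : Option ℕ) (ω : Ω) =>
      match x with
      | none => 1
      | some j => if j < u then wrrtDepth (fun k => p k ω) j + 1 else 1) (hp u) ?_
    intro a
    rcases a with _ | j
    · exact measurable_const
    · by_cases hj : j < u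
      · simp only [hj, if_true]
        exact Measurable.comp (g := fun m : ℕ => m + 1)
          Measurable.of_discrete (IH j hj)
      · simp only [hj, if_false]
        exact measurable_const

lemma measurable_wrrtDepthV (hp : ∀ n, Measurable (p n)) (v : Option ℕ) :
    Measurable fun ω => wrrtDepthV (fun k => p k ω) v := by
  rcases v with _ | m
  · exact measurable_const
  · exact measurable_wrrtDepth hp m

lemma measurable_wrrtParent (hp : ∀ n, Measurable (p n)) (v : Option ℕ) :
    Measurable fun ω => wrrtParent (fun k => p k ω) v := by
  rcases v with _ | m
  · exact measurable_const
  · have he : (fun ω => wrrtParent (fun k => p k ω) (some m))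
        = (fun x : Option ℕ => match x with
            | none => none
            | some j => if j < m then some j else none) ∘ (p m) := by
      funext ω; simp [wrrtParent, Function.comp]
    rw [he]
    exact Measurable.of_discrete.comp (hp m)

lemma measurable_wrrtDistAux (hp : ∀ n, Measurable (p n)) (f : ℕ) :
    ∀ a b : Option ℕ, Measurable fun ω => wrrtDistAux (fun k => p k ω) f a b := by
  induction f with
  | zero => intro a b; exact measurable_const
  | succ g IH =>
    intro a b
    by_cases hab : a = b
    · subst hab
      have : (fun ω => wrrtDistAux (fun k => p k ω) (g + 1) a a) = fun _ => 0 := by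
        funext ω; exact wrrtDistAux_self _ _ a
      rw [this]; exact measurable_const
    · have he : (fun ω => wrrtDistAux (fun k => p k ω) (g + 1) a b)
          = fun ω => (fun (x : ℕ × ℕ × Option ℕ × Option ℕ) (ω : Ω) =>
              if x.1 < x.2.1 then wrrtDistAux (fun k => p k ω) g a x.2.2.2 + 1
              else wrrtDistAux (fun k => p k ω) g x.2.2.1 b + 1)
            ((wrrtDepthV (fun k => p k ω) a, wrrtDepthV (fun k => p k ω) b,
              wrrtParent (fun k => p k ω) a, wrrtParent (fun k => p k ω) b)) ω := by
        funext ω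
        rw [wrrtDistAux_succ]
        simp only [hab, if_false]
      rw [he]
      refine measurable_bind' (h := fun (x : ℕ × ℕ × Option ℕ × Option ℕ) (ω : Ω) =>
          if x.1 < x.2.1 then wrrtDistAux (fun k => p k ω) g a x.2.2.2 + 1
          else wrrtDistAux (fun k => p k ω) g x.2.2.1 b + 1)
        ((measurable_wrrtDepthV hp a).prodMk ((measurable_wrrtDepthV hp b).prodMk
          ((measurable_wrrtParent hp a).prodMk (measurable_wrrtParent hp b)))) ?_
      rintro ⟨da, db, pa, pb⟩
      by_cases hlt : da < db
      · simp only [hlt, if_true]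
        exact Measurable.comp (g := fun m : ℕ => m + 1) Measurable.of_discrete (IH a pb)
      · simp only [hlt, if_false]
        exact Measurable.comp (g := fun m : ℕ => m + 1) Measurable.of_discrete (IH pa b)

lemma measurable_wrrtDist (hp : ∀ n, Measurable (p n)) (a b : Option ℕ) :
    Measurable fun ω => wrrtDist (fun k => p k ω) a b := by
  have he : (fun ω => wrrtDist (fun k => p k ω) a b)
      = fun ω => (fun (f : ℕ) (ω : Ω) => wrrtDistAux (fun k => p k ω) f a b)
          ((fun q : ℕ × ℕ => q.1 + q.2) ((wrrtDepthV (fun k => p k ω) a,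
            wrrtDepthV (fun k => p k ω) b))) ω := rfl
  rw [he]
  exact measurable_bind' (h := fun (f : ℕ) (ω : Ω) => wrrtDistAux (fun k => p k ω) f a b)
    (Measurable.of_discrete.comp (f := fun ω => ((wrrtDepthV (fun k => p k ω) a,
      wrrtDepthV (fun k => p k ω) b) : ℕ × ℕ)) (g := fun q : ℕ × ℕ => q.1 + q.2)
      ((measurable_wrrtDepthV hp a).prodMk (measurable_wrrtDepthV hp b)))
    (fun f => measurable_wrrtDistAux hp f a b)

lemma measurable_rpowdist (hp : ∀ n, Measurable (p n)) (r : ℝ) (a b : Option ℕ) :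
    Measurable fun ω => r ^ wrrtDist (fun k => p k ω) a b :=
  Measurable.comp (g := fun m : ℕ => r ^ m) Measurable.of_discrete
    (measurable_wrrtDist hp a b)

lemma integrable_rpowdist {μ : Measure Ω} [IsProbabilityMeasure μ]
    (hp : ∀ n, Measurable (p n)) {r : ℝ} (hr0 : 0 ≤ r) (hr1 : r ≤ 1) (a b : Option ℕ) :
    Integrable (fun ω => r ^ wrrtDist (fun k => p k ω) a b) μ := by
  refine (integrable_const (1 : ℝ)).mono'
    (measurable_rpowdist hp r a b).aestronglyMeasurable ?_
  filter_upwards with ω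
  rw [Real.norm_eq_abs, abs_pow, abs_of_nonneg hr0]
  exact pow_le_one₀ hr0 hr1

end Meas

section Prob
open MeasureTheory ProbabilityTheory

variable {Ω : Type*} [MeasurableSpace Ω] {μ : Measure Ω} [IsProbabilityMeasure μ]
variable {p : ℕ → Ω → Option ℕ}

/-- `E[r^{d(a,b)}]` -/
noncomputable def wrrtI (μ : Measure Ω) (r : ℝ) (p : ℕ → Ω → Option ℕ)
    (a b : Option ℕ) : ℝ :=
  ∫ ω, r ^ wrrtDist (fun k => p k ω) a b ∂μ

lemma wrrtI_nonneg (hr0 : (0:ℝ) ≤ r) (a b : Option ℕ) : 0 ≤ wrrtI μ r p a b :=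
  integral_nonneg fun ω => pow_nonneg hr0 _

lemma wrrtI_le_one (hpmeas : ∀ n, Measurable (p n)) (hr0 : (0:ℝ) ≤ r) (hr1 : r ≤ 1)
    (a b : Option ℕ) : wrrtI μ r p a b ≤ 1 := by
  have h := integral_mono (μ := μ) (integrable_rpowdist hpmeas hr0 hr1 a b)
    (integrable_const (1 : ℝ)) (fun ω => pow_le_one₀ hr0 hr1)
  simpa [wrrtI] using h

lemma indicator_factor (hpmeas : ∀ n, Measurable (p n))
    (hindep : iIndepFun (m := fun _ : ℕ => (inferInstance : MeasurableSpace (Option ℕ))) p μ)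
    {r : ℝ} (hr0 : 0 ≤ r) (hr1 : r ≤ 1)
    (n : ℕ) (c : Option ℕ) (a b : Option ℕ) (ha : wrrtBelow n a) (hb : wrrtBelow n b) :
    ∫ ω, Set.indicator ((p n) ⁻¹' {c})
        (fun ω' => r * r ^ wrrtDist (fun k => p k ω') a b) ω ∂μ
      = (μ ((p n) ⁻¹' {c})).toReal * ∫ ω, r * r ^ wrrtDist (fun k => p k ω) a b ∂μ := by
  have hA : MeasurableSet ((p n) ⁻¹' {c}) := hpmeas n (measurableSet_singleton c)
  have hXint : Integrable (fun ω => Set.indicator ((p n) ⁻¹' {c}) (fun _ => (1:ℝ)) ω) μ :=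
    (integrable_const (1:ℝ)).indicator hA
  have hYint : Integrable (fun ω => r * r ^ wrrtDist (fun k => p k ω) a b) μ :=
    (integrable_rpowdist hpmeas hr0 hr1 a b).const_mul r
  have hdisj : Disjoint ({n} : Finset ℕ) (Finset.range n) := by
    simp [Finset.disjoint_left]
  have hIndep : IndepFun (fun ω => Set.indicator ((p n) ⁻¹' {c}) (fun _ => (1:ℝ)) ω)
      (fun ω => r * r ^ wrrtDist (fun k => p k ω) a b) μ := by
    have hIF := hindep.indepFun_finset {n} (Finset.range n) hdisj hpmeas
    have hφ : Measurable (fun q : ({ x // x ∈ ({n} : Finset ℕ) } → Option ℕ) =>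
        if q ⟨n, Finset.mem_singleton_self n⟩ = c then (1:ℝ) else 0) :=
      Measurable.of_discrete
    have hψ : Measurable (fun q : ({ x // x ∈ Finset.range n } → Option ℕ) =>
        r * r ^ wrrtDist (fun k => if hk : k ∈ Finset.range n then q ⟨k, hk⟩ else none) a b) :=
      Measurable.of_discrete
    have h2 := hIF.comp hφ hψ
    have hXeq : (fun ω => Set.indicator ((p n) ⁻¹' {c}) (fun _ => (1:ℝ)) ω)
        = (fun q : ({ x // x ∈ ({n} : Finset ℕ) } → Option ℕ) =>
            if q ⟨n, Finset.mem_singleton_self n⟩ = c then (1:ℝ) else 0)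
          ∘ (fun ω (i : { x // x ∈ ({n} : Finset ℕ) }) => p (↑i) ω) := by
      funext ω
      by_cases hω : ω ∈ (p n) ⁻¹' {c}
      · have h1 : p n ω = c := hω
        simp [Set.indicator_of_mem hω, Function.comp, h1]
      · have h1 : ¬ p n ω = c := hω
        simp [Set.indicator_of_notMem hω, Function.comp, h1]
    have hYeq : (fun ω => r * r ^ wrrtDist (fun k => p k ω) a b)
        = (fun q : ({ x // x ∈ Finset.range n } → Option ℕ) =>
            r * r ^ wrrtDist (fun k => if hk : k ∈ Finset.range n then q ⟨k, hk⟩ else none) a b)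
          ∘ (fun ω (i : { x // x ∈ Finset.range n }) => p (↑i) ω) := by
      funext ω
      simp only [Function.comp]
      congr 2
      refine wrrtDist_agree _ _ n (fun k hk => ?_) a b ha hb
      simp [Finset.mem_range.mpr hk]
    rw [hXeq, hYeq]
    exact h2
  calc ∫ ω, Set.indicator ((p n) ⁻¹' {c})
        (fun ω' => r * r ^ wrrtDist (fun k => p k ω') a b) ω ∂μ
      = ∫ ω, (Set.indicator ((p n) ⁻¹' {c}) (fun _ => (1:ℝ)) ω)
          * (r * r ^ wrrtDist (fun k => p k ω) a b) ∂μ := by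
        refine integral_congr_ae (Filter.Eventually.of_forall fun ω => ?_)
        by_cases hω : ω ∈ (p n) ⁻¹' {c}
        · simp [Set.indicator_of_mem hω]
        · simp [Set.indicator_of_notMem hω]
    _ = (∫ ω, Set.indicator ((p n) ⁻¹' {c}) (fun _ => (1:ℝ)) ω ∂μ)
          * ∫ ω, r * r ^ wrrtDist (fun k => p k ω) a b ∂μ := by
        simpa using hIndep.integral_mul_eq_mul_integral hXint.aestronglyMeasurable hYint.aestronglyMeasurable
    _ = (μ ((p n) ⁻¹' {c})).toReal * ∫ ω, r * r ^ wrrtDist (fun k => p k ω) a b ∂μ := by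
        rw [integral_indicator_const (1:ℝ) hA]
        simp [measureReal_def]

lemma wrrt_step {t r : ℝ} (ht : 0 < t) (hr0 : 0 ≤ r) (hr1 : r ≤ 1)
    (hpmeas : ∀ n, Measurable (p n))
    (hroot : ∀ n : ℕ, μ {ω | p n ω = none} = ENNReal.ofReal (t / (n + t)))
    (hparent : ∀ n : ℕ, ∀ j < n, μ {ω | p n ω = some j} = ENNReal.ofReal (1 / (n + t)))
    (hindep : iIndepFun (m := fun _ : ℕ => (inferInstance : MeasurableSpace (Option ℕ))) p μ)
    {u n : ℕ} (hu : u < n) :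
    wrrtI μ r p (some u) (some n)
      ≤ r * t / (n + t) + (r / (n + t)) * ∑ j ∈ Finset.range n, wrrtI μ r p (some u) (some j) := by
  classical
  have hnt : (0:ℝ) < (n : ℝ) + t := by positivity
  set S : Finset (Option ℕ) := insert none ((Finset.range n).image some) with hS
  have hnone_notmem : (none : Option ℕ) ∉ (Finset.range n).image some := by simp
  -- the "parent of w_n" function of the value of p n
  set ρ : Option ℕ → Option ℕ := fun c => wrrtParent (fun _ => c) (some n) with hρ
  have hρω : ∀ ω, wrrtParent (fun k => p k ω) (some n) = ρ (p n ω) := fun ω => rfl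
  have hρnone : ρ none = none := by simp [hρ, wrrtParent]
  have hρsome : ∀ j, j < n → ρ (some j) = some j := by
    intro j hj; simp [hρ, wrrtParent, hj]
  have hbρ : ∀ c, wrrtBelow n (ρ c) := by
    intro c
    rcases c with _ | j
    · rw [hρnone]; trivial
    · by_cases hj : j < n
      · rw [hρsome j hj]; exact hj
      · have : ρ (some j) = none := by simp [hρ, wrrtParent, hj]
        rw [this]; trivial
  -- events
  have hAmeas : ∀ c : Option ℕ, MeasurableSet ((p n) ⁻¹' {c}) :=
    fun c => hpmeas n (measurableSet_singleton c)
  have hpre_none : (p n) ⁻¹' {none} = {ω | p n ω = none} := by ext ω; simp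
  have hpre_some : ∀ j, (p n) ⁻¹' {some j} = {ω | p n ω = some j} := by
    intro j; ext ω; simp
  -- a.e. the value of p n lies in S
  have hae : ∀ᵐ ω ∂μ, p n ω ∈ S := by
    have hUnion : (p n) ⁻¹' (↑S : Set (Option ℕ)) = ⋃ c ∈ S, (p n) ⁻¹' {c} := by
      ext ω; simp
    have hdisjS : (↑S : Set (Option ℕ)).PairwiseDisjoint (fun c => (p n) ⁻¹' {c}) := by
      intro c _ c' _ hcc'
      refine Set.disjoint_left.mpr fun ω hc hc' => ?_
      exact hcc' (by rw [← Set.mem_singleton_iff.mp hc, ← Set.mem_singleton_iff.mp hc'])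
    have hsum : μ ((p n) ⁻¹' (↑S : Set (Option ℕ))) = ∑ c ∈ S, μ ((p n) ⁻¹' {c}) := by
      rw [hUnion]
      exact measure_biUnion_finset hdisjS (fun c _ => hAmeas c)
    have hval : ∑ c ∈ S, μ ((p n) ⁻¹' {c}) = 1 := by
      rw [hS, Finset.sum_insert hnone_notmem, Finset.sum_image (by simp)]
      have h1 : μ ((p n) ⁻¹' {none}) = ENNReal.ofReal (t / (n + t)) := by
        rw [hpre_none]; exact hroot n
      have h2 : ∀ j ∈ Finset.range n,
          μ ((p n) ⁻¹' {some j}) = ENNReal.ofReal (1 / (n + t)) := by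
        intro j hj
        rw [hpre_some j]; exact hparent n j (Finset.mem_range.mp hj)
      rw [h1, Finset.sum_congr rfl h2, Finset.sum_const, Finset.card_range, nsmul_eq_mul]
      rw [← ENNReal.ofReal_natCast, ← ENNReal.ofReal_mul (by positivity),
        ← ENNReal.ofReal_add (by positivity) (by positivity)]
      have he1 : t / ((n:ℝ) + t) + (n:ℝ) * (1 / ((n:ℝ) + t)) = 1 := by
        field_simp
        ring
      rw [he1, ENNReal.ofReal_one]
    have hmeasS : MeasurableSet ((p n) ⁻¹' (↑S : Set (Option ℕ))) :=
      hpmeas n MeasurableSet.of_discrete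
    have hcompl : μ ((p n) ⁻¹' (↑S : Set (Option ℕ)))ᶜ = 0 := by
      rw [measure_compl hmeasS (measure_ne_top μ _), hsum, hval, measure_univ, tsub_self]
    rw [ae_iff]
    have hseteq : {ω | ¬ p n ω ∈ S} = ((p n) ⁻¹' (↑S : Set (Option ℕ)))ᶜ := by
      ext ω; simp
    rw [hseteq]
    exact hcompl
  -- pointwise decomposition over the value of p n
  have hptwise : ∀ᵐ ω ∂μ, (r : ℝ) ^ wrrtDist (fun k => p k ω) (some u) (some n)
      = ∑ c ∈ S, Set.indicator ((p n) ⁻¹' {c})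
          (fun ω' => r * r ^ wrrtDist (fun k => p k ω') (some u) (ρ c)) ω := by
    filter_upwards [hae] with ω hω
    have hstep : wrrtDist (fun k => p k ω) (some u) (some n)
        = wrrtDist (fun k => p k ω) (some u) (wrrtParent (fun k => p k ω) (some n)) + 1 :=
      wrrtDist_step _ n (some u) hu
    rw [Finset.sum_eq_single_of_mem (p n ω) hω]
    · rw [Set.indicator_of_mem (by exact rfl : ω ∈ (p n) ⁻¹' {p n ω})]
      rw [hstep, hρω, pow_succ, mul_comm]
    · intro c _ hc
      exact Set.indicator_of_notMem (s := (p n) ⁻¹' {c})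
        (fun h => hc (Set.mem_singleton_iff.mp (Set.mem_preimage.mp h)).symm) _
  have hint : ∀ c ∈ S, Integrable (fun ω => Set.indicator ((p n) ⁻¹' {c})
      (fun ω' => r * r ^ wrrtDist (fun k => p k ω') (some u) (ρ c)) ω) μ := by
    intro c _
    exact ((integrable_rpowdist hpmeas hr0 hr1 (some u) (ρ c)).const_mul r).indicator (hAmeas c)
  have hkey : wrrtI μ r p (some u) (some n)
      = ∑ c ∈ S, (μ ((p n) ⁻¹' {c})).toReal
          * ∫ ω, r * r ^ wrrtDist (fun k => p k ω) (some u) (ρ c) ∂μ := by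
    rw [wrrtI, integral_congr_ae hptwise, integral_finset_sum _ hint]
    refine Finset.sum_congr rfl fun c _ => ?_
    exact indicator_factor hpmeas hindep hr0 hr1 n c (some u) (ρ c) hu (hbρ c)
  rw [hkey, hS, Finset.sum_insert hnone_notmem, Finset.sum_image (by simp)]
  have hInone : ∫ ω, r * r ^ wrrtDist (fun k => p k ω) (some u) (ρ none) ∂μ ≤ r := by
    rw [show (fun ω => r * r ^ wrrtDist (fun k => p k ω) (some u) (ρ none)) = fun ω => r * r ^ wrrtDist (fun k => p k ω) (some u) (ρ none) from rfl, MeasureTheory.integral_const_mul r _]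
    calc r * wrrtI μ r p (some u) (ρ none) ≤ r * 1 :=
      mul_le_mul_of_nonneg_left (wrrtI_le_one hpmeas hr0 hr1 _ _) hr0
    _ = r := mul_one r
  have hmeasnone : (μ ((p n) ⁻¹' {none})).toReal = t / ((n:ℝ) + t) := by
    rw [hpre_none, hroot n, ENNReal.toReal_ofReal (by positivity)]
  have hterm1 : (μ ((p n) ⁻¹' {none})).toReal
      * ∫ ω, r * r ^ wrrtDist (fun k => p k ω) (some u) (ρ none) ∂μ ≤ r * t / ((n:ℝ) + t) := by
    rw [hmeasnone]
    calc t / ((n:ℝ) + t) * ∫ ω, r * r ^ wrrtDist (fun k => p k ω) (some u) (ρ none) ∂μ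
        ≤ t / ((n:ℝ) + t) * r := by
          refine mul_le_mul_of_nonneg_left hInone (by positivity)
      _ = r * t / ((n:ℝ) + t) := by ring
  have hterm2 : ∑ j ∈ Finset.range n, (μ ((p n) ⁻¹' {some j})).toReal
      * ∫ ω, r * r ^ wrrtDist (fun k => p k ω) (some u) (ρ (some j)) ∂μ
      = (r / ((n:ℝ) + t)) * ∑ j ∈ Finset.range n, wrrtI μ r p (some u) (some j) := by
    rw [Finset.mul_sum]
    refine Finset.sum_congr rfl fun j hj => ?_
    have hjn : j < n := Finset.mem_range.mp hj
    rw [hpre_some j, hparent n j hjn, ENNReal.toReal_ofReal (by positivity),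
      hρsome j hjn, MeasureTheory.integral_const_mul r _]
    rw [wrrtI]
    ring
  rw [hterm2]
  exact add_le_add hterm1 le_rfl

noncomputable def wrrtB' (μ : Measure Ω) (r : ℝ) (p : ℕ → Ω → Option ℕ) (n : ℕ) : ℝ :=
  ∫ ω, (∑ u ∈ Finset.range (n + 1), ∑ w ∈ Finset.range (n + 1),
      r ^ wrrtDist (fun k => p k ω) (some u) (some w)) ∂μ

lemma wrrtB'_eq_sum (hpmeas : ∀ n, Measurable (p n)) {r : ℝ} (hr0 : 0 ≤ r) (hr1 : r ≤ 1)
    (n : ℕ) : wrrtB' μ r p n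
      = ∑ u ∈ Finset.range (n + 1), ∑ w ∈ Finset.range (n + 1),
          wrrtI μ r p (some u) (some w) := by
  rw [wrrtB', integral_finset_sum _ (fun u _ => integrable_finset_sum _
    (fun w _ => integrable_rpowdist hpmeas hr0 hr1 (some u) (some w)))]
  exact Finset.sum_congr rfl fun u _ => integral_finset_sum _
    (fun w _ => integrable_rpowdist hpmeas hr0 hr1 (some u) (some w))

lemma wrrtI_self (m : ℕ) : wrrtI μ r p (some m) (some m) = 1 := by
  rw [wrrtI]
  have : (fun ω => r ^ wrrtDist (fun k => p k ω) (some m) (some m)) = fun _ => (1:ℝ) := by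
    funext ω
    rw [wrrtDist_self]
    exact pow_zero r
  rw [this]
  simp

lemma wrrtI_symm (a b : Option ℕ) : wrrtI μ r p a b = wrrtI μ r p b a := by
  rw [wrrtI, wrrtI]
  refine integral_congr_ae (Filter.Eventually.of_forall fun ω => ?_)
  show (r:ℝ) ^ wrrtDist (fun k => p k ω) a b = r ^ wrrtDist (fun k => p k ω) b a
  rw [wrrtDist_symm]

lemma wrrtB'_nonneg (hr0 : (0:ℝ) ≤ r) (n : ℕ) : 0 ≤ wrrtB' μ r p n :=
  integral_nonneg fun ω => Finset.sum_nonneg fun u _ => Finset.sum_nonneg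
    fun w _ => pow_nonneg hr0 _

lemma wrrtB'_zero (hr0 : (0:ℝ) ≤ r) : wrrtB' μ r p 0 = 1 := by
  rw [wrrtB']
  have : ∀ ω, (∑ u ∈ Finset.range 1, ∑ w ∈ Finset.range 1,
      (r:ℝ) ^ wrrtDist (fun k => p k ω) (some u) (some w)) = 1 := by
    intro ω
    simp [wrrtDist_self]
  rw [integral_congr_ae (Filter.Eventually.of_forall this)]
  simp

lemma wrrtB'_rec {t r : ℝ} (ht : 0 < t) (hr0 : 0 ≤ r) (hr1 : r ≤ 1)
    (hpmeas : ∀ n, Measurable (p n))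
    (hroot : ∀ n : ℕ, μ {ω | p n ω = none} = ENNReal.ofReal (t / (n + t)))
    (hparent : ∀ n : ℕ, ∀ j < n, μ {ω | p n ω = some j} = ENNReal.ofReal (1 / (n + t)))
    (hindep : iIndepFun (m := fun _ : ℕ => (inferInstance : MeasurableSpace (Option ℕ))) p μ)
    (n : ℕ) :
    wrrtB' μ r p (n + 1)
      ≤ wrrtB' μ r p n * (1 + 2 * r / (((n:ℝ) + 1) + t)) + (1 + 2 * r * t) := by
  have hnt : (0:ℝ) < ((n:ℝ) + 1) + t := by positivity
  have hsplit : wrrtB' μ r p (n + 1) = wrrtB' μ r p n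
      + 2 * (∑ u ∈ Finset.range (n + 1), wrrtI μ r p (some u) (some (n + 1))) + 1 := by
    rw [wrrtB'_eq_sum hpmeas hr0 hr1 (n+1), wrrtB'_eq_sum hpmeas hr0 hr1 n]
    rw [Finset.sum_range_succ (f := fun u => ∑ w ∈ Finset.range (n + 1 + 1),
      wrrtI μ r p (some u) (some w))]
    have hinner : ∀ u, ∑ w ∈ Finset.range (n + 1 + 1), wrrtI μ r p (some u) (some w)
        = (∑ w ∈ Finset.range (n + 1), wrrtI μ r p (some u) (some w))
          + wrrtI μ r p (some u) (some (n+1)) := fun u => Finset.sum_range_succ _ _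
    rw [Finset.sum_congr rfl (fun u _ => hinner u), Finset.sum_add_distrib, hinner (n+1),
      wrrtI_self]
    have hsym : ∑ w ∈ Finset.range (n + 1), wrrtI μ r p (some (n+1)) (some w)
        = ∑ w ∈ Finset.range (n + 1), wrrtI μ r p (some w) (some (n+1)) :=
      Finset.sum_congr rfl fun w _ => wrrtI_symm _ _
    rw [hsym]
    ring
  have hstepall : (∑ u ∈ Finset.range (n + 1), wrrtI μ r p (some u) (some (n + 1)))
      ≤ r * t + (r / (((n:ℝ) + 1) + t)) * wrrtB' μ r p n := by
    have hbound : ∀ u ∈ Finset.range (n + 1), wrrtI μ r p (some u) (some (n + 1))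
        ≤ r * t / (((n:ℝ) + 1) + t) + (r / (((n:ℝ) + 1) + t))
            * ∑ j ∈ Finset.range (n + 1), wrrtI μ r p (some u) (some j) := by
      intro u hu
      have h := wrrt_step (μ := μ) ht hr0 hr1 hpmeas hroot hparent hindep
        (Finset.mem_range.mp hu)
      have hcast : ((n + 1 : ℕ) : ℝ) = (n:ℝ) + 1 := by push_cast; ring
      rw [hcast] at h
      exact h
    calc ∑ u ∈ Finset.range (n + 1), wrrtI μ r p (some u) (some (n + 1))
        ≤ ∑ u ∈ Finset.range (n + 1), (r * t / (((n:ℝ) + 1) + t) + (r / (((n:ℝ) + 1) + t))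
            * ∑ j ∈ Finset.range (n + 1), wrrtI μ r p (some u) (some j)) :=
          Finset.sum_le_sum hbound
      _ = ((n:ℝ) + 1) * (r * t / (((n:ℝ) + 1) + t))
            + (r / (((n:ℝ) + 1) + t)) * wrrtB' μ r p n := by
          rw [Finset.sum_add_distrib, Finset.sum_const, Finset.card_range,
            wrrtB'_eq_sum hpmeas hr0 hr1 n, Finset.mul_sum]
          push_cast
          ring
      _ ≤ r * t + (r / (((n:ℝ) + 1) + t)) * wrrtB' μ r p n := by
          have h1 : ((n:ℝ) + 1) * (r * t / (((n:ℝ) + 1) + t)) ≤ r * t := by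
            rw [mul_div_assoc']
            rw [div_le_iff₀ hnt]
            nlinarith [mul_nonneg (mul_nonneg hr0 ht.le) ht.le]
          linarith
  rw [hsplit]
  have hfinal : wrrtB' μ r p n + 2 * (r * t + (r / (((n:ℝ) + 1) + t)) * wrrtB' μ r p n) + 1
      = wrrtB' μ r p n * (1 + 2 * r / (((n:ℝ) + 1) + t)) + (1 + 2 * r * t) := by
    ring
  linarith [hstepall]

end Prob

section Analytic
open Real

lemma log_gap (t : ℝ) (ht : 0 < t) (n : ℕ) :
    1 / (((n:ℝ) + 1) + t) ≤ Real.log (((n:ℝ) + 1) + t) - Real.log ((n:ℝ) + t) := by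
  have h1 : (0:ℝ) < (n:ℝ) + t := by positivity
  have h2 : (0:ℝ) < ((n:ℝ) + 1) + t := by positivity
  have h := Real.log_le_sub_one_of_pos (x := ((n:ℝ) + t) / (((n:ℝ) + 1) + t)) (by positivity)
  rw [Real.log_div h1.ne' h2.ne'] at h
  have he : ((n:ℝ) + t) / (((n:ℝ) + 1) + t) - 1 = -(1 / (((n:ℝ) + 1) + t)) := by
    field_simp
    ring
  rw [he] at h
  linarith

lemma sum_inv_le_log (t : ℝ) (ht : 0 < t) (k n : ℕ) (hkn : k ≤ n) :
    ∑ j ∈ Finset.Ioc k n, 1 / ((j:ℝ) + t)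
      ≤ Real.log ((n:ℝ) + t) - Real.log ((k:ℝ) + t) := by
  induction n, hkn using Nat.le_induction with
  | base => simp
  | succ n hkn IH =>
    rw [Finset.sum_Ioc_succ_top (by omega)]
    have hgap := log_gap t ht n
    have hcast : ((n + 1 : ℕ) : ℝ) = (n:ℝ) + 1 := by push_cast; ring
    rw [hcast]
    linarith

lemma prod_le_rpow (t r : ℝ) (ht : 0 < t) (hr0 : 0 ≤ r) {k n : ℕ} (hkn : k ≤ n) :
    ∏ j ∈ Finset.Ioc k n, (1 + 2 * r / ((j:ℝ) + t))
      ≤ (((n:ℝ) + t) / ((k:ℝ) + t)) ^ (2 * r) := by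
  have hkt : (0:ℝ) < (k:ℝ) + t := by positivity
  have hnt : (0:ℝ) < (n:ℝ) + t := by positivity
  have h1 : ∏ j ∈ Finset.Ioc k n, (1 + 2 * r / ((j:ℝ) + t))
      ≤ ∏ j ∈ Finset.Ioc k n, Real.exp (2 * r / ((j:ℝ) + t)) := by
    refine Finset.prod_le_prod (fun j _ => by positivity) (fun j _ => ?_)
    have := Real.add_one_le_exp (2 * r / ((j:ℝ) + t))
    linarith
  have h2 : ∏ j ∈ Finset.Ioc k n, Real.exp (2 * r / ((j:ℝ) + t))
      = Real.exp (∑ j ∈ Finset.Ioc k n, 2 * r / ((j:ℝ) + t)) :=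
    (Real.exp_sum _ _).symm
  have h3 : ∑ j ∈ Finset.Ioc k n, 2 * r / ((j:ℝ) + t)
      = 2 * r * ∑ j ∈ Finset.Ioc k n, 1 / ((j:ℝ) + t) := by
    rw [Finset.mul_sum]
    exact Finset.sum_congr rfl fun j _ => by ring
  have h4 : 2 * r * ∑ j ∈ Finset.Ioc k n, 1 / ((j:ℝ) + t)
      ≤ 2 * r * (Real.log ((n:ℝ) + t) - Real.log ((k:ℝ) + t)) :=
    mul_le_mul_of_nonneg_left (sum_inv_le_log t ht k n hkn) (by positivity)
  have h5 : Real.exp (2 * r * (Real.log ((n:ℝ) + t) - Real.log ((k:ℝ) + t)))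
      = (((n:ℝ) + t) / ((k:ℝ) + t)) ^ (2 * r) := by
    rw [Real.rpow_def_of_pos (by positivity), Real.log_div hnt.ne' hkt.ne']
    ring_nf
  calc ∏ j ∈ Finset.Ioc k n, (1 + 2 * r / ((j:ℝ) + t))
      ≤ Real.exp (∑ j ∈ Finset.Ioc k n, 2 * r / ((j:ℝ) + t)) := h2 ▸ h1
    _ ≤ Real.exp (2 * r * (Real.log ((n:ℝ) + t) - Real.log ((k:ℝ) + t))) := by
        rw [h3]; exact Real.exp_le_exp.mpr h4
    _ = (((n:ℝ) + t) / ((k:ℝ) + t)) ^ (2 * r) := h5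

lemma ratio_le (t : ℝ) (ht : 0 < t) (k n : ℕ) :
    ((n:ℝ) + t) / ((k:ℝ) + t)
      ≤ (max 1 t * max 1 t⁻¹) * ((n:ℝ) + 1) / ((k:ℝ) + 1) := by
  have hkt : (0:ℝ) < (k:ℝ) + t := by positivity
  have hk1 : (0:ℝ) < (k:ℝ) + 1 := by positivity
  have hmax1 : (1:ℝ) ≤ max 1 t := le_max_left _ _
  have hmax2 : (1:ℝ) ≤ max 1 t⁻¹ := le_max_left _ _
  have hn : (n:ℝ) + t ≤ max 1 t * ((n:ℝ) + 1) := by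
    have h1 : (n:ℝ) ≤ max 1 t * (n:ℝ) := le_mul_of_one_le_left (by positivity) hmax1
    have h2 : t ≤ max 1 t := le_max_right _ _
    nlinarith
  have hk : (k:ℝ) + 1 ≤ max 1 t⁻¹ * ((k:ℝ) + t) := by
    have h1 : (k:ℝ) ≤ max 1 t⁻¹ * (k:ℝ) := le_mul_of_one_le_left (by positivity) hmax2
    have h2 : (1:ℝ) ≤ max 1 t⁻¹ * t := by
      calc (1:ℝ) = t⁻¹ * t := by field_simp
        _ ≤ max 1 t⁻¹ * t := mul_le_mul_of_nonneg_right (le_max_right _ _) ht.le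
    nlinarith
  have hmm : ((n:ℝ) + t) * ((k:ℝ) + 1)
      ≤ (max 1 t * ((n:ℝ) + 1)) * (max 1 t⁻¹ * ((k:ℝ) + t)) :=
    mul_le_mul hn hk (by positivity) (by positivity)
  rw [div_le_div_iff₀ hkt hk1]
  nlinarith [hmm]

lemma prod_le_final (t r : ℝ) (ht : 0 < t) (hr0 : 0 ≤ r) {k n : ℕ} (hkn : k ≤ n) :
    ∏ j ∈ Finset.Ioc k n, (1 + 2 * r / ((j:ℝ) + t))
      ≤ (max 1 t * max 1 t⁻¹) ^ (2 * r) * (((n:ℝ) + 1) ^ (2 * r) / ((k:ℝ) + 1) ^ (2 * r)) := by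
  have hM : (0:ℝ) < max 1 t * max 1 t⁻¹ := by positivity
  have h1 := prod_le_rpow t r ht hr0 hkn
  have h2 : (((n:ℝ) + t) / ((k:ℝ) + t)) ^ (2 * r)
      ≤ ((max 1 t * max 1 t⁻¹) * ((n:ℝ) + 1) / ((k:ℝ) + 1)) ^ (2 * r) :=
    Real.rpow_le_rpow (by positivity) (ratio_le t ht k n) (by positivity)
  have h3 : ((max 1 t * max 1 t⁻¹) * ((n:ℝ) + 1) / ((k:ℝ) + 1)) ^ (2 * r)
      = (max 1 t * max 1 t⁻¹) ^ (2 * r) * (((n:ℝ) + 1) ^ (2 * r) / ((k:ℝ) + 1) ^ (2 * r)) := by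
    rw [mul_div_assoc, Real.mul_rpow hM.le (by positivity),
      Real.div_rpow (by positivity) (by positivity)]
  calc ∏ j ∈ Finset.Ioc k n, (1 + 2 * r / ((j:ℝ) + t))
      ≤ (((n:ℝ) + t) / ((k:ℝ) + t)) ^ (2 * r) := h1
    _ ≤ ((max 1 t * max 1 t⁻¹) * ((n:ℝ) + 1) / ((k:ℝ) + 1)) ^ (2 * r) := h2
    _ = _ := h3

end Analytic

lemma rec_to_sum (t r K : ℝ) (ht : 0 < t) (hr0 : 0 ≤ r) (hK : 1 ≤ K) (b : ℕ → ℝ)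
    (hb0 : b 0 ≤ 1)
    (hrec : ∀ n : ℕ, b (n + 1) ≤ b n * (1 + 2 * r / (((n:ℝ) + 1) + t)) + K)
    (hbnn : ∀ n, 0 ≤ b n) :
    ∀ n, b n ≤ K * ∑ k ∈ Finset.range (n + 1),
      ∏ j ∈ Finset.Ioc k n, (1 + 2 * r / ((j:ℝ) + t)) := by
  intro n
  induction n with
  | zero =>
    have h0 : ∑ k ∈ Finset.range 1, ∏ j ∈ Finset.Ioc k 0, (1 + 2 * r / ((j:ℝ) + t)) = 1 := by
      simp
    rw [h0, mul_one]
    linarith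
  | succ n IH =>
    have hc : (0:ℝ) ≤ 1 + 2 * r / (((n:ℝ) + 1) + t) := by positivity
    have h1 : b (n + 1) ≤ (K * ∑ k ∈ Finset.range (n + 1),
        ∏ j ∈ Finset.Ioc k n, (1 + 2 * r / ((j:ℝ) + t)))
          * (1 + 2 * r / (((n:ℝ) + 1) + t)) + K := by
      calc b (n + 1) ≤ b n * (1 + 2 * r / (((n:ℝ) + 1) + t)) + K := hrec n
        _ ≤ (K * ∑ k ∈ Finset.range (n + 1),
            ∏ j ∈ Finset.Ioc k n, (1 + 2 * r / ((j:ℝ) + t)))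
              * (1 + 2 * r / (((n:ℝ) + 1) + t)) + K := by
            have := mul_le_mul_of_nonneg_right IH hc
            linarith
    have h2 : (∑ k ∈ Finset.range (n + 1), ∏ j ∈ Finset.Ioc k n,
        (1 + 2 * r / ((j:ℝ) + t))) * (1 + 2 * r / (((n:ℝ) + 1) + t))
        = ∑ k ∈ Finset.range (n + 1), ∏ j ∈ Finset.Ioc k (n + 1),
            (1 + 2 * r / ((j:ℝ) + t)) := by
      rw [Finset.sum_mul]
      refine Finset.sum_congr rfl fun k hk => ?_
      have hkn : k ≤ n := Nat.lt_succ_iff.mp (Finset.mem_range.mp hk)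
      rw [Finset.prod_Ioc_succ_top hkn]
      have hcast : ((n + 1 : ℕ) : ℝ) = (n:ℝ) + 1 := by push_cast; ring
      rw [hcast]
    have h3 : ∑ k ∈ Finset.range (n + 1 + 1), ∏ j ∈ Finset.Ioc k (n + 1),
        (1 + 2 * r / ((j:ℝ) + t))
        = (∑ k ∈ Finset.range (n + 1), ∏ j ∈ Finset.Ioc k (n + 1),
            (1 + 2 * r / ((j:ℝ) + t))) + 1 := by
      rw [Finset.sum_range_succ, Finset.Ioc_self, Finset.prod_empty]
    rw [h3, mul_add, mul_one]
    calc b (n + 1) ≤ (K * ∑ k ∈ Finset.range (n + 1),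
        ∏ j ∈ Finset.Ioc k n, (1 + 2 * r / ((j:ℝ) + t)))
          * (1 + 2 * r / (((n:ℝ) + 1) + t)) + K := h1
      _ = K * (∑ k ∈ Finset.range (n + 1), ∏ j ∈ Finset.Ioc k (n + 1),
            (1 + 2 * r / ((j:ℝ) + t))) + K := by rw [mul_assoc, h2]

open MeasureTheory ProbabilityTheory in
theorem wrrt_B_sum_bound'
    {Ω : Type*} [MeasurableSpace Ω] (μ : Measure Ω) [IsProbabilityMeasure μ]
    (t r : ℝ) (ht : 0 < t) (hr : r ∈ Set.Ioo (0 : ℝ) 1)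
    (p : ℕ → Ω → Option ℕ) (hpmeas : ∀ n, Measurable (p n))
    (hroot : ∀ n : ℕ, μ {ω | p n ω = none} = ENNReal.ofReal (t / (n + t)))
    (hparent : ∀ n : ℕ, ∀ j < n, μ {ω | p n ω = some j} = ENNReal.ofReal (1 / (n + t)))
    (hindep : iIndepFun (m := fun _ : ℕ => (inferInstance : MeasurableSpace (Option ℕ))) p μ)
    :
    ∃ C > 0, ∀ n : ℕ,
      wrrtB' μ r p n ≤
        C * ∑ k ∈ Finset.range (n + 1), ((n : ℝ) + 1) ^ (2 * r) / ((k : ℝ) + 1) ^ (2 * r) := by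
  obtain ⟨hr0, hr1⟩ := hr
  have hr0' : (0:ℝ) ≤ r := hr0.le
  have hr1' : r ≤ 1 := hr1.le
  have hM : (0:ℝ) < max 1 t * max 1 t⁻¹ := by positivity
  set K : ℝ := 1 + 2 * r * t with hKdef
  have hK : (1:ℝ) ≤ K := by
    have : 0 ≤ 2 * r * t := by positivity
    linarith
  refine ⟨K * (max 1 t * max 1 t⁻¹) ^ (2 * r), ?_, ?_⟩
  · have h1 : (0:ℝ) < (max 1 t * max 1 t⁻¹) ^ (2 * r) := Real.rpow_pos_of_pos hM _
    nlinarith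
  · intro n
    have hrecB := rec_to_sum t r K ht hr0' hK (fun m => wrrtB' μ r p m)
      (le_of_eq (wrrtB'_zero hr0'))
      (fun m => wrrtB'_rec ht hr0' hr1' hpmeas hroot hparent hindep m)
      (fun m => wrrtB'_nonneg hr0' m) n
    calc wrrtB' μ r p n
        ≤ K * ∑ k ∈ Finset.range (n + 1), ∏ j ∈ Finset.Ioc k n,
            (1 + 2 * r / ((j:ℝ) + t)) := hrecB
      _ ≤ K * ∑ k ∈ Finset.range (n + 1), (max 1 t * max 1 t⁻¹) ^ (2 * r)
            * (((n:ℝ) + 1) ^ (2 * r) / ((k:ℝ) + 1) ^ (2 * r)) := by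
          refine mul_le_mul_of_nonneg_left (Finset.sum_le_sum fun k hk => ?_)
            (by linarith)
          exact prod_le_final t r ht hr0' (Nat.lt_succ_iff.mp (Finset.mem_range.mp hk))
      _ = K * (max 1 t * max 1 t⁻¹) ^ (2 * r)
            * ∑ k ∈ Finset.range (n + 1), ((n:ℝ) + 1) ^ (2 * r) / ((k:ℝ) + 1) ^ (2 * r) := by
          rw [← Finset.mul_sum, ← mul_assoc]

/-- **Estimate (3.15).** There is a constant `C > 0` (depending on `r` and `t`) with
`B_n(r) ≤ C ∑_{k=0}^n (n+1)^{2r}/(k+1)^{2r}` for all `n ≥ 0`. -/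
theorem wrrt_B_sum_bound
    {Ω : Type*} [MeasurableSpace Ω] (μ : Measure Ω) [IsProbabilityMeasure μ]
    (t r : ℝ) (ht : 0 < t) (hr : r ∈ Set.Ioo (0 : ℝ) 1)
    -- `p n` is the (random) parent of the vertex `w n` of the weighted random
    -- recursive tree with root weight `t`:
    (p : ℕ → Ω → Option ℕ) (hpmeas : ∀ n, Measurable (p n))
    (hroot : ∀ n : ℕ, μ {ω | p n ω = none} = ENNReal.ofReal (t / (n + t)))
    (hparent : ∀ n : ℕ, ∀ j < n, μ {ω | p n ω = some j} = ENNReal.ofReal (1 / (n + t)))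
    (hindep : iIndepFun (m := fun _ : ℕ => (inferInstance : MeasurableSpace (Option ℕ))) p μ)
    :
    ∃ C > 0, ∀ n : ℕ,
      wrrtB μ r p n ≤
        C * ∑ k ∈ Finset.range (n + 1), ((n : ℝ) + 1) ^ (2 * r) / ((k : ℝ) + 1) ^ (2 * r) := by
  obtain ⟨C, hC, hB⟩ := wrrt_B_sum_bound' μ t r ht hr p hpmeas hroot hparent hindep
  exact ⟨C, hC, fun n => hB n⟩
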